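/- Theorem 1 (conservation of information flows): Suppose random variables x_0, x^n, y^n, e^n satisfy: (i) x_i is a deterministic function of (x_0, e^{i-1}) for each i; (ii) I(x_0; e_i | e^{i-1}, x^i) = 0 for each i; (iii) I(x_0; e_i | e^{i-1}, y^i) = 0 for each i. Then I(y^n → e^n) = I(x^n → e^n) + I(y^n → e^n | x_0). -/

import Mathlib

open scoped BigOperators

/-- Distribution of a finite-valued random variable `X` under pmf `p`. -/
noncomputable def rvDist {Ω A : Type*} [Fintype Ω] [Fintype A] [DecidableEq A]
    (p : Ω → ℝ) (X : Ω → A) (a : A) : ℝ := ∑ ω, if X ω = a then p ω else 0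

/-- Shannon entropy `H(X)`. -/
noncomputable def ent {Ω A : Type*} [Fintype Ω] [Fintype A] [DecidableEq A]
    (p : Ω → ℝ) (X : Ω → A) : ℝ := ∑ a, Real.negMulLog (rvDist p X a)

/-- Conditional entropy `H(X | Y) = H(X,Y) - H(Y)`. -/
noncomputable def condEnt {Ω A B : Type*} [Fintype Ω] [Fintype A] [DecidableEq A]
    [Fintype B] [DecidableEq B] (p : Ω → ℝ) (X : Ω → A) (Y : Ω → B) : ℝ :=
  ent p (fun ω => (X ω, Y ω)) - ent p Y

/-- Mutual information `I(X;Y) = H(X)+H(Y)-H(X,Y)`. -/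
noncomputable def MI {Ω A B : Type*} [Fintype Ω] [Fintype A] [DecidableEq A]
    [Fintype B] [DecidableEq B] (p : Ω → ℝ) (X : Ω → A) (Y : Ω → B) : ℝ :=
  ent p X + ent p Y - ent p (fun ω => (X ω, Y ω))

/-- Conditional mutual information `I(X;Y|Z) = H(X|Z)+H(Y|Z)-H(X,Y|Z)`. -/
noncomputable def CMI {Ω A B C : Type*} [Fintype Ω] [Fintype A] [DecidableEq A]
    [Fintype B] [DecidableEq B] [Fintype C] [DecidableEq C]
    (p : Ω → ℝ) (X : Ω → A) (Y : Ω → B) (Z : Ω → C) : ℝ :=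
  condEnt p X Z + condEnt p Y Z - condEnt p (fun ω => (X ω, Y ω)) Z

/-- The prefix `x^i = (x_1, …, x_i)` of a random sequence, as a random variable. -/
def pre {Ω A : Type*} {n : ℕ} (x : Fin n → Ω → A) (i : ℕ) (h : i ≤ n) :
    Ω → (Fin i → A) := fun ω j => x (Fin.castLE h j) ω

/-- Directed information `I(x^n → y^n) = ∑_{i=1}^n I(x^i; y_i | y^{i-1})`. -/
noncomputable def DI {Ω A B : Type*} [Fintype Ω] [Fintype A] [DecidableEq A]
    [Fintype B] [DecidableEq B] {n : ℕ}
    (p : Ω → ℝ) (x : Fin n → Ω → A) (y : Fin n → Ω → B) : ℝ :=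
  ∑ i : Fin n, CMI p (pre x (i.1+1) i.isLt) (y i) (pre y i.1 i.isLt.le)

section aux
variable {Ω A B C D : Type*} [Fintype Ω] [Fintype A] [DecidableEq A]
  [Fintype B] [DecidableEq B] [Fintype C] [DecidableEq C] [Fintype D] [DecidableEq D]
variable (p : Ω → ℝ)

lemma rvDist_nonneg (hp : ∀ ω, 0 ≤ p ω) (X : Ω → A) (a : A) : 0 ≤ rvDist p X a := by
  unfold rvDist
  exact Finset.sum_nonneg fun ω _ => by split_ifs <;> [exact hp ω; exact le_rfl]

lemma rvDist_pos (hp : ∀ ω, 0 ≤ p ω) (X : Ω → A) (ω : Ω) (hω : p ω ≠ 0) :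
    0 < rvDist p X (X ω) := by
  have h1 : p ω ≤ rvDist p X (X ω) := by
    unfold rvDist
    have := Finset.single_le_sum (f := fun ω' => if X ω' = X ω then p ω' else 0)
      (fun ω' _ => by split_ifs <;> [exact hp ω'; exact le_rfl]) (Finset.mem_univ ω)
    simpa using this
  exact lt_of_lt_of_le (lt_of_le_of_ne (hp ω) (Ne.symm hω)) h1

lemma exists_of_rvDist_ne_zero {X : Ω → A} {a : A} (h : rvDist p X a ≠ 0) :
    ∃ ω, p ω ≠ 0 ∧ X ω = a := by
  unfold rvDist at h
  obtain ⟨ω, _, hω⟩ := Finset.exists_ne_zero_of_sum_ne_zero h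
  by_cases hx : X ω = a
  · exact ⟨ω, by simpa [hx] using hω, hx⟩
  · simp [hx] at hω

lemma rvDist_pair_snd (X : Ω → A) (W : Ω → B) (b : B) :
    ∑ a, rvDist p (fun ω => (X ω, W ω)) (a, b) = rvDist p W b := by
  unfold rvDist
  rw [Finset.sum_comm]
  refine Finset.sum_congr rfl fun ω _ => ?_
  by_cases hw : W ω = b <;> simp [Prod.ext_iff, hw]

lemma ent_pair_fun (X : Ω → A) (Y : Ω → B) (f : A → B) (h : ∀ ω, Y ω = f (X ω)) :
    ent p (fun ω => (X ω, Y ω)) = ent p X := by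
  unfold ent
  rw [Fintype.sum_prod_type]
  refine Finset.sum_congr rfl fun a _ => ?_
  have key : ∀ b, rvDist p (fun ω => (X ω, Y ω)) (a, b)
      = if b = f a then rvDist p X a else 0 := by
    intro b
    unfold rvDist
    split_ifs with hb
    · subst hb
      refine Finset.sum_congr rfl fun ω _ => ?_
      by_cases hx : X ω = a
      · simp [hx, h ω]
      · simp [hx, Prod.ext_iff]
    · refine Finset.sum_eq_zero fun ω _ => ?_
      rw [if_neg]
      intro he
      have h1 : X ω = a := (Prod.ext_iff.mp he).1
      have h2 : Y ω = b := (Prod.ext_iff.mp he).2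
      exact hb (by rw [← h2, h ω, h1])
  calc ∑ b, Real.negMulLog (rvDist p (fun ω => (X ω, Y ω)) (a, b))
      = ∑ b, Real.negMulLog (if b = f a then rvDist p X a else 0) := by
        exact Finset.sum_congr rfl fun b _ => by rw [key b]
    _ = Real.negMulLog (rvDist p X a) := by
        simp [apply_ite Real.negMulLog]

lemma ent_swap (X : Ω → A) (Y : Ω → B) :
    ent p (fun ω => (X ω, Y ω)) = ent p (fun ω => (Y ω, X ω)) := by
  unfold ent
  refine Fintype.sum_equiv (Equiv.prodComm A B) _ _ fun c => ?_
  obtain ⟨a, b⟩ := c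
  congr 1
  unfold rvDist
  refine Finset.sum_congr rfl fun ω _ => ?_
  simp only [Prod.ext_iff, Equiv.prodComm_apply, Prod.swap]
  exact if_congr and_comm rfl rfl

lemma ent_congr (X : Ω → A) (Y : Ω → B) (f : A → B) (g : B → A)
    (hf : ∀ ω, Y ω = f (X ω)) (hg : ∀ ω, X ω = g (Y ω)) : ent p X = ent p Y := by
  rw [← ent_pair_fun p X Y f hf, ent_swap, ent_pair_fun p Y X g hg]

lemma CMI_eq (X : Ω → A) (Y : Ω → B) (Z : Ω → C) :
    CMI p X Y Z = ent p (fun ω => (X ω, Z ω)) + ent p (fun ω => (Y ω, Z ω))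
      - ent p (fun ω => ((X ω, Y ω), Z ω)) - ent p Z := by
  simp only [CMI, condEnt]
  ring

lemma cmi_chain (W : Ω → A) (Y : Ω → B) (E : Ω → C) (Z : Ω → D) :
    CMI p (fun ω => (W ω, Y ω)) E Z
      = CMI p Y E Z + CMI p W E (fun ω => (Z ω, Y ω)) := by
  rw [CMI_eq, CMI_eq, CMI_eq]
  have h1 : ent p (fun ω => (W ω, (Z ω, Y ω))) = ent p (fun ω => ((W ω, Y ω), Z ω)) :=
    ent_congr p _ _ (fun c => ((c.1, c.2.2), c.2.1)) (fun c => (c.1.1, (c.2, c.1.2)))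
      (fun ω => rfl) (fun ω => rfl)
  have h2 : ent p (fun ω => (E ω, (Z ω, Y ω))) = ent p (fun ω => ((Y ω, E ω), Z ω)) :=
    ent_congr p _ _ (fun c => ((c.2.2, c.1), c.2.1)) (fun c => (c.1.2, (c.2, c.1.1)))
      (fun ω => rfl) (fun ω => rfl)
  have h3 : ent p (fun ω => ((W ω, E ω), (Z ω, Y ω)))
      = ent p (fun ω => (((W ω, Y ω), E ω), Z ω)) :=
    ent_congr p _ _ (fun c => (((c.1.1, c.2.2), c.1.2), c.2.1))
      (fun c => ((c.1.1.1, c.1.2), (c.2, c.1.1.2))) (fun ω => rfl) (fun ω => rfl)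
  have h4 : ent p (fun ω => (Z ω, Y ω)) = ent p (fun ω => (Y ω, Z ω)) := ent_swap p Z Y
  linarith

lemma CMI_congr_fst (X : Ω → A) (X' : Ω → B) (f : A → B) (g : B → A)
    (hf : ∀ ω, X' ω = f (X ω)) (hg : ∀ ω, X ω = g (X' ω))
    (Y : Ω → C) (Z : Ω → D) : CMI p X Y Z = CMI p X' Y Z := by
  rw [CMI_eq, CMI_eq]
  have h1 : ent p (fun ω => (X ω, Z ω)) = ent p (fun ω => (X' ω, Z ω)) :=
    ent_congr p _ _ (fun c => (f c.1, c.2)) (fun c => (g c.1, c.2))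
      (fun ω => by simp [hf ω]) (fun ω => by simp [← hg ω])
  have h2 : ent p (fun ω => ((X ω, Y ω), Z ω)) = ent p (fun ω => ((X' ω, Y ω), Z ω)) :=
    ent_congr p _ _ (fun c => ((f c.1.1, c.1.2), c.2)) (fun c => ((g c.1.1, c.1.2), c.2))
      (fun ω => by simp [hf ω]) (fun ω => by simp [← hg ω])
  linarith

lemma negMulLog_add_le {x y : ℝ} (hx : 0 ≤ x) (hy : 0 ≤ y) :
    Real.negMulLog (x + y) ≤ Real.negMulLog x + Real.negMulLog y := by
  have h1 : x * Real.log x ≤ x * Real.log (x + y) := by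
    rcases eq_or_lt_of_le hx with h | h
    · simp [← h]
    · exact mul_le_mul_of_nonneg_left (Real.log_le_log h (by linarith)) hx
  have h2 : y * Real.log y ≤ y * Real.log (x + y) := by
    rcases eq_or_lt_of_le hy with h | h
    · simp [← h]
    · exact mul_le_mul_of_nonneg_left (Real.log_le_log h (by linarith)) hy
  simp only [Real.negMulLog, neg_mul]
  nlinarith

lemma negMulLog_add_lt {x y : ℝ} (hx : 0 < x) (hy : 0 < y) :
    Real.negMulLog (x + y) < Real.negMulLog x + Real.negMulLog y := by
  have h1 : x * Real.log x < x * Real.log (x + y) :=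
    mul_lt_mul_of_pos_left (Real.log_lt_log hx (by linarith)) hx
  have h2 : y * Real.log y ≤ y * Real.log (x + y) :=
    mul_le_mul_of_nonneg_left (Real.log_le_log hy (by linarith)) hy.le
  simp only [Real.negMulLog, neg_mul]
  nlinarith

lemma negMulLog_sum_le {ι : Type*} {s : Finset ι} {d : ι → ℝ} (hd : ∀ i ∈ s, 0 ≤ d i) :
    Real.negMulLog (∑ i ∈ s, d i) ≤ ∑ i ∈ s, Real.negMulLog (d i) := by
  induction s using Finset.cons_induction with
  | empty => simp
  | cons a s ha ih =>
    rw [Finset.sum_cons, Finset.sum_cons]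
    have hds : 0 ≤ ∑ i ∈ s, d i :=
      Finset.sum_nonneg fun i hi => hd i (Finset.mem_cons_of_mem hi)
    calc Real.negMulLog (d a + ∑ i ∈ s, d i)
        ≤ Real.negMulLog (d a) + Real.negMulLog (∑ i ∈ s, d i) :=
          negMulLog_add_le (hd a (Finset.mem_cons_self a s)) hds
      _ ≤ _ := add_le_add_right (ih fun i hi => hd i (Finset.mem_cons_of_mem hi)) _

lemma negMulLog_sum_lt {d : A → ℝ} (hd : ∀ a, 0 ≤ d a) {a₁ a₂ : A} (hne : a₁ ≠ a₂)
    (h1 : 0 < d a₁) (h2 : 0 < d a₂) :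
    Real.negMulLog (∑ a, d a) < ∑ a, Real.negMulLog (d a) := by
  rw [← Finset.add_sum_erase _ d (Finset.mem_univ a₁),
    ← Finset.add_sum_erase _ (fun a => Real.negMulLog (d a)) (Finset.mem_univ a₁)]
  have hy : 0 < ∑ a ∈ Finset.univ.erase a₁, d a :=
    lt_of_lt_of_le h2 (Finset.single_le_sum (fun i _ => hd i)
      (Finset.mem_erase.mpr ⟨hne.symm, Finset.mem_univ _⟩))
  calc Real.negMulLog (d a₁ + ∑ a ∈ Finset.univ.erase a₁, d a)
      < Real.negMulLog (d a₁) + Real.negMulLog (∑ a ∈ Finset.univ.erase a₁, d a) :=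
        negMulLog_add_lt h1 hy
    _ ≤ _ := add_le_add_right (negMulLog_sum_le fun i _ => hd i) _

lemma condEnt_pair_eq (X : Ω → A) (W : Ω → B) :
    condEnt p X W = ∑ b, (∑ a, Real.negMulLog (rvDist p (fun ω => (X ω, W ω)) (a, b))
      - Real.negMulLog (rvDist p W b)) := by
  unfold condEnt ent
  rw [Fintype.sum_prod_type, Finset.sum_comm, ← Finset.sum_sub_distrib]

def Det (p : Ω → ℝ) (W : Ω → B) (X : Ω → A) : Prop :=
  ∀ ω ω', p ω ≠ 0 → p ω' ≠ 0 → W ω = W ω' → X ω = X ω'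

lemma det_of_condEnt_eq_zero (hp : ∀ ω, 0 ≤ p ω) (X : Ω → A) (W : Ω → B)
    (h : condEnt p X W = 0) : Det p W X := by
  rw [condEnt_pair_eq] at h
  have hterm : ∀ b, 0 ≤ ∑ a, Real.negMulLog (rvDist p (fun ω => (X ω, W ω)) (a, b))
      - Real.negMulLog (rvDist p W b) := by
    intro b
    have := negMulLog_sum_le (s := Finset.univ)
      (d := fun a => rvDist p (fun ω => (X ω, W ω)) (a, b))
      (fun a _ => rvDist_nonneg p hp _ _)
    rw [rvDist_pair_snd] at this
    linarith
  have hall := (Finset.sum_eq_zero_iff_of_nonneg (fun b _ => hterm b)).mp h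
  intro ω ω' hω hω' hW
  by_contra hX
  have h1 : 0 < rvDist p (fun ω => (X ω, W ω)) (X ω, W ω) := rvDist_pos p hp _ ω hω
  have h2 : 0 < rvDist p (fun ω => (X ω, W ω)) (X ω', W ω) := by
    have := rvDist_pos p hp (fun ω => (X ω, W ω)) ω' hω'
    rwa [← hW] at this
  have hlt := negMulLog_sum_lt (d := fun a => rvDist p (fun ω => (X ω, W ω)) (a, W ω))
    (fun a => rvDist_nonneg p hp _ _) hX h1 h2
  rw [rvDist_pair_snd] at hlt
  have := hall (W ω) (Finset.mem_univ _)
  linarith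

lemma condEnt_eq_zero_of_det (X : Ω → A) (W : Ω → B) (h : Det p W X) :
    condEnt p X W = 0 := by
  rw [condEnt_pair_eq]
  refine Finset.sum_eq_zero fun b _ => ?_
  rw [sub_eq_zero, ← rvDist_pair_snd p X W b]
  by_cases hz : ∀ a, rvDist p (fun ω => (X ω, W ω)) (a, b) = 0
  · simp [hz]
  · push_neg at hz
    obtain ⟨a₀, ha₀⟩ := hz
    have hz' : ∀ a, a ≠ a₀ → rvDist p (fun ω => (X ω, W ω)) (a, b) = 0 := by
      intro a ha
      by_contra hab
      obtain ⟨ω, hω, hXW⟩ := exists_of_rvDist_ne_zero p hab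
      obtain ⟨ω₀, hω₀, hXW₀⟩ := exists_of_rvDist_ne_zero p ha₀
      have e1 : X ω = a ∧ W ω = b := by simpa [Prod.ext_iff] using hXW
      have e2 : X ω₀ = a₀ ∧ W ω₀ = b := by simpa [Prod.ext_iff] using hXW₀
      have := h ω ω₀ hω hω₀ (by rw [e1.2, e2.2])
      exact ha (by rw [← e1.1, this, e2.1])
    rw [Finset.sum_eq_single a₀ (fun a _ ha => by rw [hz' a ha, Real.negMulLog_zero])
        (by simp),
      Finset.sum_eq_single a₀ (fun a _ ha => hz' a ha) (by simp)]

lemma CMI_eq_zero_of_det (X : Ω → A) (Y : Ω → B) (Z : Ω → C) (h : Det p Z X) :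
    CMI p X Y Z = 0 := by
  rw [CMI_eq]
  have h1 : ent p (fun ω => (X ω, Z ω)) = ent p Z := by
    have := condEnt_eq_zero_of_det p X Z h
    unfold condEnt at this
    linarith
  have hd2 : Det p (fun ω => (Y ω, Z ω)) X :=
    fun ω ω' hω hω' hE => h ω ω' hω hω' (congrArg Prod.snd hE)
  have h2 : ent p (fun ω => ((X ω, Y ω), Z ω)) = ent p (fun ω => (Y ω, Z ω)) := by
    have ha : ent p (fun ω => ((X ω, Y ω), Z ω)) = ent p (fun ω => (X ω, (Y ω, Z ω))) :=
      ent_congr p _ _ (fun c => (c.1.1, (c.1.2, c.2))) (fun c => ((c.1, c.2.1), c.2.2))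
        (fun ω => rfl) (fun ω => rfl)
    have := condEnt_eq_zero_of_det p X (fun ω => (Y ω, Z ω)) hd2
    unfold condEnt at this
    linarith
  linarith

end aux


set_option maxHeartbeats 1000000 in
/-- Theorem 1, conservation of information flows:
`I(y^n → e^n) = I(x^n → e^n) + I(y^n → e^n | x_0)`. -/
theorem conservation_of_information_flows {Ω M A B C : Type*} [Fintype Ω]
    [Fintype M] [DecidableEq M] [Fintype A] [DecidableEq A]
    [Fintype B] [DecidableEq B] [Fintype C] [DecidableEq C] {n : ℕ} (p : Ω → ℝ)
    (hp : ∀ ω, 0 ≤ p ω) (hp1 : ∑ ω, p ω = 1)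
    (x0 : Ω → M) (x : Fin n → Ω → A) (y : Fin n → Ω → B) (e : Fin n → Ω → C)
    (hdet : ∀ i : Fin n, condEnt p (x i) (fun ω => (x0 ω, pre e i.1 i.isLt.le ω)) = 0)
    (hmarkov : ∀ i : Fin n,
      CMI p x0 (e i) (fun ω => (pre e i.1 i.isLt.le ω, pre x (i.1+1) i.isLt ω)) = 0)
    (hcausal : ∀ i : Fin n,
      CMI p x0 (e i) (fun ω => (pre e i.1 i.isLt.le ω, pre y (i.1+1) i.isLt ω)) = 0) :
    DI p y e = DI p x e +
      ∑ i : Fin n, CMI p (pre y (i.1+1) i.isLt) (e i)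
        (fun ω => (pre e i.1 i.isLt.le ω, x0 ω)) := by
  have key : ∀ i : Fin n, CMI p (pre y (i.1+1) i.isLt) (e i) (pre e i.1 i.isLt.le)
      = CMI p (pre x (i.1+1) i.isLt) (e i) (pre e i.1 i.isLt.le)
        + CMI p (pre y (i.1+1) i.isLt) (e i)
            (fun ω => (pre e i.1 i.isLt.le ω, x0 ω)) := by
    intro i
    have cy1 := cmi_chain p x0 (pre y (i.1+1) i.isLt) (e i) (pre e i.1 i.isLt.le)
    have cy2 := cmi_chain p (pre y (i.1+1) i.isLt) x0 (e i) (pre e i.1 i.isLt.le)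
    have cysw : CMI p (fun ω => (x0 ω, pre y (i.1+1) i.isLt ω)) (e i) (pre e i.1 i.isLt.le)
        = CMI p (fun ω => (pre y (i.1+1) i.isLt ω, x0 ω)) (e i) (pre e i.1 i.isLt.le) :=
      CMI_congr_fst p (fun ω => (x0 ω, pre y (i.1+1) i.isLt ω))
        (fun ω => (pre y (i.1+1) i.isLt ω, x0 ω)) (fun c => (c.2, c.1)) (fun c => (c.2, c.1))
        (fun ω => rfl) (fun ω => rfl) (e i) (pre e i.1 i.isLt.le)
    have cx1 := cmi_chain p x0 (pre x (i.1+1) i.isLt) (e i) (pre e i.1 i.isLt.le)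
    have cx2 := cmi_chain p (pre x (i.1+1) i.isLt) x0 (e i) (pre e i.1 i.isLt.le)
    have cxsw : CMI p (fun ω => (x0 ω, pre x (i.1+1) i.isLt ω)) (e i) (pre e i.1 i.isLt.le)
        = CMI p (fun ω => (pre x (i.1+1) i.isLt ω, x0 ω)) (e i) (pre e i.1 i.isLt.le) :=
      CMI_congr_fst p (fun ω => (x0 ω, pre x (i.1+1) i.isLt ω))
        (fun ω => (pre x (i.1+1) i.isLt ω, x0 ω)) (fun c => (c.2, c.1)) (fun c => (c.2, c.1))
        (fun ω => rfl) (fun ω => rfl) (e i) (pre e i.1 i.isLt.le)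
    have hcy := hcausal i
    have hmx := hmarkov i
    have hdet' : Det p (fun ω => (pre e i.1 i.isLt.le ω, x0 ω)) (pre x (i.1+1) i.isLt) := by
      intro ω ω' hω hω' hWe
      have hE : pre e i.1 i.isLt.le ω = pre e i.1 i.isLt.le ω' := congrArg Prod.fst hWe
      have hx0 : x0 ω = x0 ω' := congrArg Prod.snd hWe
      funext j
      show x (Fin.castLE i.isLt j) ω = x (Fin.castLE i.isLt j) ω'
      set m : Fin n := Fin.castLE i.isLt j with hm
      have hd := det_of_condEnt_eq_zero p hp _ _ (hdet m)
      apply hd ω ω' hω hω'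
      refine Prod.ext_iff.mpr ⟨hx0, ?_⟩
      funext k
      show e (Fin.castLE m.isLt.le k) ω = e (Fin.castLE m.isLt.le k) ω'
      have hk : k.1 < i.1 := lt_of_lt_of_le k.2 (Nat.lt_succ_iff.mp j.2)
      have := congrFun hE ⟨k.1, hk⟩
      simpa [pre, Fin.castLE] using this
    have hC : CMI p (pre x (i.1+1) i.isLt) (e i)
        (fun ω => (pre e i.1 i.isLt.le ω, x0 ω)) = 0 :=
      CMI_eq_zero_of_det p _ _ _ hdet'
    linarith
  unfold DI
  rw [← Finset.sum_add_distrib]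
  exact Finset.sum_congr rfl fun i _ => key i
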